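/- Let F be an anti-invariant Riemannian submersion from a Sasakian manifold with φ(ker F_*) = (ker F_*)^⊥. Then the horizontal distribution (ker F_*)^⊥ is integrable if and only if A_X φY = A_Y φX for all horizontal vector fields X, Y, where A is the O'Neill tensor. -/

import Mathlib

/-- Algebraic model of a Riemannian submersion `F : (M,g_M) → (N,g_N)`:
`Fn` plays the role of smooth functions on `M`, `VF` of vector fields on `M`,
`g` is the metric, `der` the directional derivative, `nabla` the Levi-Civita
connection, `bracket` the Lie bracket, and `vert`/`horiz` the projections onto
the vertical distribution `ker F_*` and the horizontal distribution
`(ker F_*)^⊥` determined by the fibers of the submersion. -/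
structure RiemannianSubmersionData (Fn VF : Type) [CommRing Fn] [Algebra ℝ Fn]
    [AddCommGroup VF] [Module Fn VF] where
  g : VF → VF → Fn
  g_symm : ∀ X Y, g X Y = g Y X
  g_add_left : ∀ X Y Z, g (X + Y) Z = g X Z + g Y Z
  g_smul_left : ∀ (f : Fn) (X Y : VF), g (f • X) Y = f * g X Y
  g_nondeg : ∀ X, (∀ Y, g X Y = 0) → X = 0
  der : VF → Fn → Fn
  der_add : ∀ X f₁ f₂, der X (f₁ + f₂) = der X f₁ + der X f₂
  der_mul : ∀ X f₁ f₂, der X (f₁ * f₂) = f₁ * der X f₂ + f₂ * der X f₁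
  bracket : VF → VF → VF
  nabla : VF → VF → VF
  nabla_add_left : ∀ X Y Z, nabla (X + Y) Z = nabla X Z + nabla Y Z
  nabla_add_right : ∀ X Y Z, nabla X (Y + Z) = nabla X Y + nabla X Z
  nabla_smul_left : ∀ (f : Fn) (X Y : VF), nabla (f • X) Y = f • nabla X Y
  nabla_smul_right : ∀ (f : Fn) (X Y : VF),
    nabla X (f • Y) = f • nabla X Y + der X f • Y
  torsion_free : ∀ X Y, nabla X Y - nabla Y X = bracket X Y
  compat : ∀ X Y Z, der X (g Y Z) = g (nabla X Y) Z + g Y (nabla X Z)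
  vert : VF → VF
  horiz : VF → VF
  vert_add : ∀ X Y, vert (X + Y) = vert X + vert Y
  vert_smul : ∀ (f : Fn) (X : VF), vert (f • X) = f • vert X
  horiz_add : ∀ X Y, horiz (X + Y) = horiz X + horiz Y
  horiz_smul : ∀ (f : Fn) (X : VF), horiz (f • X) = f • horiz X
  vert_add_horiz : ∀ X, vert X + horiz X = X
  vert_vert : ∀ X, vert (vert X) = vert X
  vert_horiz : ∀ X, vert (horiz X) = 0
  horiz_vert : ∀ X, horiz (vert X) = 0
  g_vert_horiz : ∀ X Y, g (vert X) (horiz Y) = 0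
  vert_bracket : ∀ X Y, vert X = X → vert Y = Y → vert (bracket X Y) = bracket X Y

namespace RiemannianSubmersionData

variable {Fn VF : Type} [CommRing Fn] [Algebra ℝ Fn] [AddCommGroup VF] [Module Fn VF]

/-- O'Neill tensor `T_E F = H∇_{VE}(VF) + V∇_{VE}(HF)`. -/
def T (S : RiemannianSubmersionData Fn VF) (E F : VF) : VF :=
  S.horiz (S.nabla (S.vert E) (S.vert F)) + S.vert (S.nabla (S.vert E) (S.horiz F))

/-- O'Neill tensor `A_E F = V∇_{HE}(HF) + H∇_{HE}(VF)`. -/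
def A (S : RiemannianSubmersionData Fn VF) (E F : VF) : VF :=
  S.vert (S.nabla (S.horiz E) (S.horiz F)) + S.horiz (S.nabla (S.horiz E) (S.vert F))

end RiemannianSubmersionData

/-- A Riemannian submersion from a Sasakian manifold `M(φ,ξ,η,g)` onto a
Riemannian manifold: the total space carries an almost contact metric structure
`(phi, xi, eta, g)` satisfying the Sasakian condition
`(∇_X φ)Y = g(X,Y)ξ - η(Y)X` (and hence `R(ξ,X)Y = g(X,Y)ξ - η(Y)X`). -/
structure SasakianSubmersionData (Fn VF : Type) [CommRing Fn] [Algebra ℝ Fn]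
    [AddCommGroup VF] [Module Fn VF] extends RiemannianSubmersionData Fn VF where
  phi : VF → VF
  xi : VF
  eta : VF → Fn
  phi_add : ∀ X Y, phi (X + Y) = phi X + phi Y
  phi_smul : ∀ (f : Fn) (X : VF), phi (f • X) = f • phi X
  eta_add : ∀ X Y, eta (X + Y) = eta X + eta Y
  eta_smul : ∀ (f : Fn) (X : VF), eta (f • X) = f * eta X
  phi_phi : ∀ X, phi (phi X) = -X + eta X • xi
  phi_xi : phi xi = 0
  eta_phi : ∀ X, eta (phi X) = 0
  eta_xi : eta xi = 1
  g_phi : ∀ X Y, g (phi X) (phi Y) = g X Y - eta X * eta Y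
  eta_g : ∀ X, eta X = g X xi
  sasaki : ∀ X Y, nabla X (phi Y) - phi (nabla X Y) = g X Y • xi - eta Y • X
  curv_xi : ∀ X Y, nabla xi (nabla X Y) - nabla X (nabla xi Y)
      - nabla (bracket xi X) Y = g X Y • xi - eta Y • X

namespace SasakianSubmersionData

variable {Fn VF : Type} [CommRing Fn] [Algebra ℝ Fn] [AddCommGroup VF] [Module Fn VF]

/-- Vertical part `BX` of `φX` for horizontal `X`. -/
def B (S : SasakianSubmersionData Fn VF) (X : VF) : VF := S.vert (S.phi X)

/-- Horizontal (`μ`-)part `CX` of `φX` for horizontal `X`. -/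
def C (S : SasakianSubmersionData Fn VF) (X : VF) : VF := S.horiz (S.phi X)

/-- O'Neill tensor `T`. -/
def T (S : SasakianSubmersionData Fn VF) : VF → VF → VF :=
  S.toRiemannianSubmersionData.T

/-- O'Neill tensor `A`. -/
def A (S : SasakianSubmersionData Fn VF) : VF → VF → VF :=
  S.toRiemannianSubmersionData.A

/-- `F` is anti-invariant: `φ(ker F_*) ⊆ (ker F_*)^⊥`. -/
def AntiInvariant (S : SasakianSubmersionData Fn VF) : Prop :=
  ∀ U, S.vert U = U → S.horiz (S.phi U) = S.phi U

end SasakianSubmersionData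

section AuxHom

private lemma addhom_zero' {A B : Type} [AddCommGroup A] [AddCommGroup B]
    (f : A → B) (h : ∀ x y, f (x + y) = f x + f y) : f 0 = 0 := by
  have h0 := h 0 0
  rw [add_zero] at h0
  exact (right_eq_add.mp h0)

private lemma addhom_sub' {A B : Type} [AddCommGroup A] [AddCommGroup B]
    (f : A → B) (h : ∀ x y, f (x + y) = f x + f y) (x y : A) :
    f (x - y) = f x - f y := by
  have h0 := h (x - y) y
  rw [sub_add_cancel] at h0
  exact eq_sub_of_add_eq h0.symm

private lemma addhom_neg' {A B : Type} [AddCommGroup A] [AddCommGroup B]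
    (f : A → B) (h : ∀ x y, f (x + y) = f x + f y) (x : A) :
    f (-x) = -f x := by
  have h0 := addhom_sub' f h 0 x
  rw [zero_sub, addhom_zero' f h, zero_sub] at h0
  exact h0

end AuxHom

open SasakianSubmersionData in
/-- Corollary 1: for an anti-invariant Riemannian submersion from a Sasakian
manifold with `φ(ker F_*) = (ker F_*)^⊥`, the horizontal distribution
`(ker F_*)^⊥` is integrable iff `A_X φY = A_Y φX` for all horizontal `X, Y`. -/
theorem horizontal_integrable_iff {Fn VF : Type} [CommRing Fn] [Algebra ℝ Fn]
    [AddCommGroup VF] [Module Fn VF]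
    (S : SasakianSubmersionData Fn VF)
    (hxi : S.vert S.xi = S.xi)
    (hanti : S.AntiInvariant)
    (heq : ∀ X, S.horiz X = X → ∃ U, S.vert U = U ∧ S.phi U = X) :
    (∀ X Y, S.horiz X = X → S.horiz Y = Y → S.vert (S.bracket X Y) = 0) ↔
      (∀ X Y, S.horiz X = X → S.horiz Y = Y →
        S.A X (S.phi Y) = S.A Y (S.phi X)) := by
  -- basic map lemmas
  have vert0 : S.vert 0 = 0 := addhom_zero' _ S.vert_add
  have horiz0 : S.horiz 0 = 0 := addhom_zero' _ S.horiz_add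
  have phi0 : S.phi 0 = 0 := addhom_zero' _ S.phi_add
  have vert_sub : ∀ a b, S.vert (a - b) = S.vert a - S.vert b :=
    addhom_sub' _ S.vert_add
  have horiz_sub : ∀ a b, S.horiz (a - b) = S.horiz a - S.horiz b :=
    addhom_sub' _ S.horiz_add
  have phi_sub : ∀ a b, S.phi (a - b) = S.phi a - S.phi b :=
    addhom_sub' _ S.phi_add
  have vert_neg : ∀ a, S.vert (-a) = -S.vert a := addhom_neg' _ S.vert_add
  have nabla0r : ∀ X, S.nabla X 0 = 0 := fun X => addhom_zero' _ (S.nabla_add_right X)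
  have der0 : ∀ X, S.der X (0 : Fn) = 0 := fun X => addhom_zero' _ (S.der_add X)
  have gsub_l : ∀ a b c, S.g (a - b) c = S.g a c - S.g b c := fun a b c =>
    addhom_sub' (fun x => S.g x c) (fun x y => S.g_add_left x y c) a b
  have horiz_horiz : ∀ X, S.horiz (S.horiz X) = S.horiz X := by
    intro X
    have h := S.vert_add_horiz (S.horiz X)
    rw [S.vert_horiz, zero_add] at h
    exact h
  have eta_horiz : ∀ X, S.horiz X = X → S.eta X = 0 := by
    intro X hX
    rw [S.eta_g, S.g_symm]
    calc S.g S.xi X = S.g (S.vert S.xi) (S.horiz X) := by rw [hxi, hX]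
      _ = 0 := S.g_vert_horiz _ _
  have g_horiz_xi : ∀ X, S.horiz X = X → S.g X S.xi = 0 := by
    intro X hX
    rw [← S.eta_g]
    exact eta_horiz X hX
  -- φ of a horizontal field is vertical
  have phiY_vert : ∀ X, S.horiz X = X → S.vert (S.phi X) = S.phi X := by
    intro X hX
    obtain ⟨U, hU, hUX⟩ := heq X hX
    have h : S.phi X = -U + S.eta U • S.xi := by rw [← hUX, S.phi_phi]
    rw [h, S.vert_add, vert_neg, S.vert_smul, hU, hxi]
  -- horizontal part of φW
  have horiz_phi : ∀ W, S.horiz (S.phi W) = S.phi (S.vert W) := by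
    intro W
    have hdecomp : S.phi W = S.phi (S.vert W) + S.phi (S.horiz W) := by
      rw [← S.phi_add, S.vert_add_horiz]
    have h1 := phiY_vert (S.horiz W) (horiz_horiz W)
    have h2 : S.horiz (S.phi (S.horiz W)) = 0 := by rw [← h1, S.horiz_vert]
    rw [hdecomp, S.horiz_add, hanti _ (S.vert_vert W), h2, add_zero]
  -- O'Neill tensor on horizontal fields
  have A_eq : ∀ X Y, S.horiz X = X → S.horiz Y = Y →
      S.A X (S.phi Y) = S.horiz (S.phi (S.nabla X Y)) := by
    intro X Y hX hY
    have hvY := phiY_vert Y hY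
    have hhY : S.horiz (S.phi Y) = 0 := by rw [← hvY, S.horiz_vert]
    show S.vert (S.nabla (S.horiz X) (S.horiz (S.phi Y)))
        + S.horiz (S.nabla (S.horiz X) (S.vert (S.phi Y)))
        = S.horiz (S.phi (S.nabla X Y))
    rw [hX, hhY, hvY, nabla0r, vert0, zero_add]
    have hsas := S.sasaki X Y
    rw [eta_horiz Y hY, zero_smul, sub_zero] at hsas
    have hξh : S.horiz S.xi = 0 := by rw [← hxi, S.horiz_vert]
    have h := congrArg S.horiz hsas
    rw [horiz_sub, S.horiz_smul, hξh, smul_zero] at h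
    exact sub_eq_zero.mp h
  -- difference of the two A's
  have diff : ∀ X Y, S.horiz X = X → S.horiz Y = Y →
      S.A X (S.phi Y) - S.A Y (S.phi X) = S.phi (S.vert (S.bracket X Y)) := by
    intro X Y hX hY
    rw [A_eq X Y hX hY, A_eq Y X hY hX, ← horiz_sub, ← phi_sub, S.torsion_free,
      horiz_phi]
  -- η of the bracket of horizontal fields vanishes
  have nab_xi : ∀ Z W, S.horiz Z = Z → S.horiz W = W →
      S.g (S.nabla Z W) S.xi = 0 := by
    intro Z W hZ hW
    have hgZξ : S.g Z S.xi = 0 := g_horiz_xi Z hZ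
    have hgWξ : S.g W S.xi = 0 := g_horiz_xi W hW
    have hs := S.sasaki Z S.xi
    rw [S.phi_xi, nabla0r, S.eta_xi, one_smul, hgZξ, zero_smul, zero_sub,
      zero_sub] at hs
    have hphinz : S.phi (S.nabla Z S.xi) = Z := neg_injective hs
    have hg := S.g_phi W (S.nabla Z S.xi)
    rw [hphinz, eta_horiz W hW, zero_mul, sub_zero] at hg
    have h1 : S.g (S.phi W) Z = 0 := by
      rw [← phiY_vert W hW, ← hZ]
      exact S.g_vert_horiz _ _
    have h2 : S.g W (S.nabla Z S.xi) = 0 := by rw [← hg]; exact h1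
    have hc := S.compat Z W S.xi
    rw [hgWξ, der0, h2, add_zero] at hc
    exact hc.symm
  have eta_bracket : ∀ X Y, S.horiz X = X → S.horiz Y = Y →
      S.g (S.bracket X Y) S.xi = 0 := by
    intro X Y hX hY
    rw [← S.torsion_free, gsub_l, nab_xi X Y hX hY, nab_xi Y X hY hX, sub_zero]
  -- injectivity of φ on η-less vertical fields
  have phi_vert_inj : ∀ W, S.g W S.xi = 0 → S.phi (S.vert W) = 0 →
      S.vert W = 0 := by
    intro W hη hφ
    have h := S.phi_phi (S.vert W)
    rw [hφ, phi0] at h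
    have hhWξ : S.g (S.horiz W) S.xi = 0 := by
      rw [S.g_symm, ← hxi]
      exact S.g_vert_horiz _ _
    have hev : S.eta (S.vert W) = 0 := by
      rw [S.eta_g]
      have h2 : S.g W S.xi = S.g (S.vert W) S.xi + S.g (S.horiz W) S.xi := by
        rw [← S.g_add_left, S.vert_add_horiz]
      rw [hhWξ, add_zero] at h2
      rw [← h2, hη]
    rw [hev, zero_smul, add_zero] at h
    exact neg_eq_zero.mp h.symm
  constructor
  · intro hint X Y hX hY
    have hd := diff X Y hX hY
    rw [hint X Y hX hY, phi0] at hd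
    exact sub_eq_zero.mp hd
  · intro hA X Y hX hY
    have hd := diff X Y hX hY
    rw [hA X Y hX hY, sub_self] at hd
    exact phi_vert_inj _ (eta_bracket X Y hX hY) hd.symm
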